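/- Let N, n and d be positive integers, let A be a nontrivial finite group and let B ≤ Sym(n) be a permutation group. If the permutational wreath product G = A^N ≀ B = (A^N)^n ⋊ B can be generated by d elements, then N ≤ |A|^{nd}. -/

import Mathlib

open Equiv

/-- The automorphism of `β → G` given by permuting coordinates by `b : Perm β`. -/
def permCoordAut {β : Type} (G : Type*) [Group G] (b : Perm β) : (β → G) ≃* (β → G) where
  toFun x := fun i => x (b⁻¹ i)
  invFun x := fun i => x (b i)
  left_inv x := by funext i; simp
  right_inv x := by funext i; simp
  map_mul' x y := rfl

/-- The action (by automorphisms) of a permutation group `B ≤ Perm β` on `β → G`,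
permuting the coordinates. -/
def permCoordHom {β : Type} (B : Subgroup (Perm β)) (G : Type*) [Group G] :
    B →* MulAut (β → G) where
  toFun b := permCoordAut G (b : Perm β)
  map_one' := by
    apply MulEquiv.ext; intro x; funext i; simp [permCoordAut]
  map_mul' b c := by
    apply MulEquiv.ext; intro x; funext i
    simp [permCoordAut, Perm.mul_apply, mul_inv_rev, MulAut.mul_apply]

/-- The (abstract) permutational wreath product `C ≀ B = C^n ⋊ B` of a group `C` by a
permutation group `B ≤ Perm β`, with `B` permuting the coordinates of `C^β`. -/
abbrev WreathSD {β : Type} (C : Type*) [Group C] (B : Subgroup (Perm β)) :=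
  SemidirectProduct (β → C) B (permCoordHom B C)

/-- The minimal number of generators of a group. -/
noncomputable def minGens (G : Type*) [Group G] : ℕ :=
  sInf {r | ∃ T : Finset G, T.card = r ∧ Subgroup.closure (T : Set G) = ⊤}
/-- **Lemma (key bound in the proof of the lower bound).** If `A^N ≀ B` is `d`-generated
then `N ≤ |A|^(n d)`. -/
theorem card_bound (N n d : ℕ) (hN : 0 < N) (hn : 0 < n) (hd : 0 < d)
    (A : Type) [Group A] [Finite A] [Nontrivial A]
    (B : Subgroup (Perm (Fin n)))
    (hgen : ∃ T : Finset (WreathSD (Fin N → A) B), T.card ≤ d ∧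
      Subgroup.closure (T : Set (WreathSD (Fin N → A) B)) = ⊤) :
    N ≤ Nat.card A ^ (n * d) := by
  classical
  by_contra hlt
  push_neg at hlt
  obtain ⟨T, hTcard, hTgen⟩ := hgen
  have hA : 1 ≤ Nat.card A := Nat.one_le_iff_ne_zero.2 (Nat.card_ne_zero.2 ⟨inferInstance, inferInstance⟩)
  -- pigeonhole: the map sending a coordinate l to the values of all generators at l
  set φ : Fin N → (T → Fin n → A) :=
    fun l t j => (t : WreathSD (Fin N → A) B).left j l with hφ
  have hcardfun : Nat.card (T → Fin n → A) ≤ Nat.card A ^ (n * d) := by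
    have : Nat.card (T → Fin n → A) = (Nat.card A ^ n) ^ T.card := by
      simp [Nat.card_fun, Nat.card_eq_fintype_card, Fintype.card_coe, mul_comm]
    rw [this, ← pow_mul]
    exact Nat.pow_le_pow_right hA (by nlinarith)
  have hninj : ¬ Function.Injective φ := by
    intro hinj
    have := Nat.card_le_card_of_injective φ hinj
    simp only [Nat.card_eq_fintype_card, Fintype.card_fin] at this
    omega
  rw [Function.not_injective_iff] at hninj
  obtain ⟨l, l', heq, hne⟩ := hninj
  -- the subgroup of elements whose base coordinates agree at l and l'
  let S : Subgroup (WreathSD (Fin N → A) B) :=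
  { carrier := {g | ∀ j, g.left j l = g.left j l'}
    mul_mem' := by
      intro a b ha hb j
      simp only [Set.mem_setOf_eq] at ha hb ⊢
      have : (a * b).left j = a.left j * b.left ((a.right : Perm (Fin n))⁻¹ j) := by
        simp [SemidirectProduct.mul_left, permCoordHom, permCoordAut]
      simp [this, Pi.mul_apply, ha j, hb _]
    one_mem' := by intro j; simp
    inv_mem' := by
      intro a ha j
      simp only [Set.mem_setOf_eq] at ha ⊢
      have : (a⁻¹).left j = (a.left ((a.right : Perm (Fin n)) j))⁻¹ := by
        simp [SemidirectProduct.inv_left, permCoordHom, permCoordAut]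
        rfl
      simp [this, Pi.inv_apply, ha _] }
  have hTS : (T : Set (WreathSD (Fin N → A) B)) ⊆ S := by
    intro t ht j
    have := congrFun (congrFun heq ⟨t, ht⟩) j
    simpa [hφ] using this
  have hStop : S = ⊤ := top_le_iff.1 (hTgen ▸ Subgroup.closure_le S |>.2 hTS)
  -- contradiction: build an element not in S
  obtain ⟨a, ha1⟩ := exists_ne (1 : A)
  set x : Fin n → Fin N → A := fun _ lv => if lv = l then a else 1 with hx
  have hmem : SemidirectProduct.inl x ∈ S := hStop ▸ Subgroup.mem_top _
  have := hmem ⟨0, hn⟩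
  simp only [SemidirectProduct.left_inl, hx] at this
  simp only [if_pos rfl, if_neg (Ne.symm hne)] at this
  exact ha1 this
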